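/- Let R be a ring, δ a derivation of R, and A = R[x; δ] the differential operator ring. If I is a proper δ-invariant ideal of R, then I is δ-prime (i.e., whenever J·K ⊆ I for δ-invariant ideals J, K of R, then J ⊆ I or K ⊆ I) if and only if the extension ideal I·A is a prime ideal of A; in this case I·A = A·I and I·A ∩ R = I. -/

import Mathlib

/-- `A` is the Ore extension `R[x; σ, δ]`: `R` embeds via `i`, `x·r = σ(r)·x + δ(r)`, and
`A` is a free left `R`-module with basis the powers of `x`. -/
structure IsOreExtension {R A : Type*} [Ring R] [Ring A]
    (σ : R →+* R) (δ : R → R) (i : R →+* A) (x : A) : Prop where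
  inj : Function.Injective i
  comm : ∀ r : R, x * i r = i (σ r) * x + i (δ r)
  repr : ∀ a : A, ∃! c : ℕ →₀ R, a = c.sum fun k r => i r * x ^ k

/-- The set `I·A` of elements of an Ore extension all of whose left coefficients lie in `I`. -/
def oreLeftCoeffSet {R A : Type*} [Ring R] [Ring A] (i : R →+* A) (x : A)
    (I : TwoSidedIdeal R) : Set A :=
  {a : A | ∃ c : ℕ →₀ R, (∀ k, c k ∈ I) ∧ a = c.sum fun k r => i r * x ^ k}

/-- The set `A·I` of elements of an Ore extension all of whose right coefficients lie in `I`. -/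
def oreRightCoeffSet {R A : Type*} [Ring R] [Ring A] (i : R →+* A) (x : A)
    (I : TwoSidedIdeal R) : Set A :=
  {a : A | ∃ c : ℕ →₀ R, (∀ k, c k ∈ I) ∧ a = c.sum fun k r => x ^ k * i r}

namespace OreAux

variable {R A : Type*} [Ring R] [Ring A] {δ : R → R} {i : R →+* A} {x : A}

lemma sum_mem_tsi {I : TwoSidedIdeal R} {ι : Type*} (s : Finset ι) (f : ι → R)
    (h : ∀ j ∈ s, f j ∈ I) : ∑ j ∈ s, f j ∈ I := by
  classical
  induction s using Finset.induction_on with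
  | empty => simpa using I.zero_mem
  | insert j0 s0 hj ih =>
    rw [Finset.sum_insert hj]
    exact I.add_mem (h _ (Finset.mem_insert_self _ _))
      (ih fun j hjs => h j (Finset.mem_insert_of_mem hjs))

variable (hA : IsOreExtension (RingHom.id R) δ i x)

noncomputable def co (a : A) : ℕ →₀ R := (hA.repr a).choose

lemma co_spec (a : A) : a = (co hA a).sum fun k r => i r * x ^ k :=
  (hA.repr a).choose_spec.1

lemma co_unique {a : A} {c : ℕ →₀ R} (h : a = c.sum fun k r => i r * x ^ k) :
    co hA a = c := ((hA.repr a).choose_spec.2 c h).symm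

lemma co_basis (k : ℕ) (r : R) : co hA (i r * x ^ k) = Finsupp.single k r :=
  co_unique hA (by rw [Finsupp.sum_single_index]; simp)

lemma co_i (r : R) : co hA (i r) = Finsupp.single 0 r := by
  simpa using co_basis hA 0 r

lemma co_zero : co hA (0 : A) = 0 :=
  co_unique hA (by rw [Finsupp.sum_zero_index])

lemma co_add (a b : A) : co hA (a + b) = co hA a + co hA b := by
  refine co_unique hA ?_
  rw [Finsupp.sum_add_index' (fun k => by simp) (fun k r s => by rw [map_add, add_mul])]
  rw [← co_spec hA a, ← co_spec hA b]

lemma co_neg (a : A) : co hA (-a) = -co hA a := by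
  have h := co_add hA (-a) a
  rw [neg_add_cancel, co_zero hA] at h
  exact eq_neg_of_add_eq_zero_left h.symm

lemma co_sub (a b : A) : co hA (a - b) = co hA a - co hA b := by
  rw [sub_eq_add_neg, sub_eq_add_neg, co_add hA, co_neg hA]

noncomputable def coHom : A →+ (ℕ →₀ R) := AddMonoidHom.mk' (co hA) (co_add hA)

lemma co_sum {ι : Type*} (s : Finset ι) (f : ι → A) :
    co hA (∑ j ∈ s, f j) = ∑ j ∈ s, co hA (f j) :=
  map_sum (coHom hA) f s

lemma co_i_mul (s : R) (a : A) (k : ℕ) : co hA (i s * a) k = s * co hA a k := by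
  have : co hA (i s * a) = Finsupp.mapRange (s * ·) (mul_zero s) (co hA a) := by
    refine co_unique hA ?_
    rw [Finsupp.sum_mapRange_index (fun k => by simp)]
    conv_lhs => rw [co_spec hA a]
    rw [Finsupp.mul_sum]
    exact Finset.sum_congr rfl fun j _ => by simp only []; rw [← mul_assoc, ← map_mul]
  rw [this, Finsupp.mapRange_apply]

noncomputable def succEmb : ℕ ↪ ℕ := ⟨Nat.succ, Nat.succ_injective⟩

lemma co_mul_x (a : A) : co hA (a * x) = Finsupp.embDomain succEmb (co hA a) := by
  refine co_unique hA ?_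
  rw [Finsupp.sum_embDomain]
  conv_lhs => rw [co_spec hA a]
  rw [Finsupp.sum_mul]
  exact Finset.sum_congr rfl fun j _ => by
    show i _ * x ^ j * x = i _ * x ^ (j + 1)
    rw [pow_succ, mul_assoc]

lemma co_mul_x_succ (a : A) (k : ℕ) : co hA (a * x) (k + 1) = co hA a k := by
  rw [co_mul_x hA]
  exact Finsupp.embDomain_apply_self succEmb (co hA a) k

lemma co_mul_x_zero (a : A) : co hA (a * x) 0 = 0 := by
  rw [co_mul_x hA]
  refine Finsupp.embDomain_notin_range _ _ _ ?_
  rintro ⟨k, hk⟩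
  exact Nat.succ_ne_zero k hk

section Delta
variable (hadd : ∀ r s : R, δ (r + s) = δ r + δ s)

include hadd

lemma delta_zero : δ 0 = 0 := by
  have h := hadd 0 0
  rw [add_zero] at h
  exact left_eq_add.mp h

lemma co_x_mul (a : A) :
    co hA (x * a) = Finsupp.embDomain succEmb (co hA a)
      + Finsupp.mapRange δ (delta_zero hadd) (co hA a) := by
  refine co_unique hA ?_
  rw [Finsupp.sum_add_index' (fun k => by simp) (fun k r s => by rw [map_add, add_mul])]
  rw [Finsupp.sum_embDomain, Finsupp.sum_mapRange_index (fun k => by simp)]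
  conv_lhs => rw [co_spec hA a]
  rw [Finsupp.mul_sum]
  simp only [Finsupp.sum]
  rw [← Finset.sum_add_distrib]
  refine Finset.sum_congr rfl fun j _ => ?_
  show x * (i _ * x ^ j) = i _ * x ^ (Nat.succ j) + i (δ _) * x ^ j
  rw [← mul_assoc, hA.comm, RingHom.id_apply, add_mul, mul_assoc, ← pow_succ']

lemma co_x_mul_zero (a : A) : co hA (x * a) 0 = δ (co hA a 0) := by
  rw [co_x_mul hA hadd, Finsupp.add_apply, Finsupp.mapRange_apply]
  rw [Finsupp.embDomain_notin_range _ _ _ (by rintro ⟨k, hk⟩; exact Nat.succ_ne_zero k hk)]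
  rw [zero_add]

lemma co_x_mul_succ (a : A) (k : ℕ) :
    co hA (x * a) (k + 1) = co hA a k + δ (co hA a (k + 1)) := by
  rw [co_x_mul hA hadd, Finsupp.add_apply, Finsupp.mapRange_apply]
  congr 1
  exact Finsupp.embDomain_apply_self succEmb (co hA a) k

lemma co_xpow_i (j : ℕ) (s : R) :
    co hA (x ^ j * i s) j = s ∧ ∀ k, j < k → co hA (x ^ j * i s) k = 0 := by
  induction j with
  | zero =>
    simp only [pow_zero, one_mul, co_i hA]
    constructor
    · simp
    · intro k hk
      rw [Finsupp.single_apply, if_neg (by omega)]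
  | succ j ih =>
    have hx : x ^ (j + 1) * i s = x * (x ^ j * i s) := by rw [pow_succ', mul_assoc]
    constructor
    · rw [hx, co_x_mul_succ hA hadd, ih.1, ih.2 (j + 1) (Nat.lt_succ_self j),
        delta_zero hadd, add_zero]
    · intro k hk
      match k, hk with
      | (t + 1), hk =>
        rw [hx, co_x_mul_succ hA hadd, ih.2 t (by omega), ih.2 (t + 1) (by omega),
          delta_zero hadd, add_zero]

lemma co_xpow_mul_mem {J : TwoSidedIdeal R} (hJ : ∀ r ∈ J, δ r ∈ J) {a : A}
    (h : ∀ k, co hA a k ∈ J) (j : ℕ) : ∀ k, co hA (x ^ j * a) k ∈ J := by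
  induction j with
  | zero => simpa using h
  | succ j ih =>
    have hx : x ^ (j + 1) * a = x * (x ^ j * a) := by rw [pow_succ', mul_assoc]
    intro k
    match k with
    | 0 => rw [hx, co_x_mul_zero hA hadd]; exact hJ _ (ih 0)
    | (t + 1) =>
      rw [hx, co_x_mul_succ hA hadd]
      exact J.add_mem (ih t) (hJ _ (ih (t + 1)))

end Delta

lemma co_mul_apply (a b : A) (k : ℕ) :
    co hA (a * b) k = ∑ j ∈ (co hA a).support, co hA a j * co hA (x ^ j * b) k := by
  have h1 : a * b = ∑ j ∈ (co hA a).support, i (co hA a j) * (x ^ j * b) := by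
    conv_lhs => rw [co_spec hA a]
    rw [Finsupp.sum_mul]
    simp only [Finsupp.sum]
    exact Finset.sum_congr rfl fun j _ => by rw [mul_assoc]
  rw [h1, co_sum hA, Finsupp.finset_sum_apply]
  exact Finset.sum_congr rfl fun j _ => co_i_mul hA _ _ _

lemma keySum {I : TwoSidedIdeal R} (c : ℕ →₀ R) (g : ℕ → R) (m : ℕ)
    (hc : ∀ k, m < k → c k ∈ I) (hg : ∀ j, j < m → g j ∈ I) :
    (∑ j ∈ c.support, c j * g j) - c m * g m ∈ I := by
  classical
  have h2 : ∑ j ∈ c.support, (c j * g j - if j = m then c m * g m else 0) ∈ I := by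
    refine sum_mem_tsi _ _ fun j hj => ?_
    by_cases hjm : j = m
    · subst hjm; simpa using I.zero_mem
    · rw [if_neg hjm, sub_zero]
      rcases lt_or_gt_of_ne hjm with hlt | hgt
      · exact I.mul_mem_left _ _ (hg j hlt)
      · exact I.mul_mem_right _ _ (hc j hgt)
  rw [Finset.sum_sub_distrib, Finset.sum_ite_eq' c.support m (fun _ => c m * g m)] at h2
  by_cases hm : m ∈ c.support
  · rwa [if_pos hm] at h2
  · rw [if_neg hm, sub_zero] at h2
    rw [Finsupp.notMem_support_iff.mp hm, zero_mul, sub_zero]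
    exact h2

lemma mem_left_iff {I : TwoSidedIdeal R} {a : A} :
    a ∈ oreLeftCoeffSet i x I ↔ ∀ k, co hA a k ∈ I := by
  constructor
  · rintro ⟨c, hc, rfl⟩ k
    rw [co_unique hA rfl]
    exact hc k
  · intro h
    exact ⟨co hA a, h, co_spec hA a⟩

section More
variable (hadd : ∀ r s : R, δ (r + s) = δ r + δ s)
include hadd

lemma co_commutator (a : A) (k : ℕ) :
    co hA (x * a - a * x) k = δ (co hA a k) := by
  rw [co_sub hA, Finsupp.sub_apply]
  match k with
  | 0 => rw [co_x_mul_zero hA hadd, co_mul_x_zero hA, sub_zero]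
  | (t + 1) =>
    rw [co_x_mul_succ hA hadd, co_mul_x_succ hA, add_sub_cancel_left]

lemma co_xpow_mul_bound {I : TwoSidedIdeal R} (hδI : ∀ r ∈ I, δ r ∈ I) {b : A} {n : ℕ}
    (hb : ∀ k, n < k → co hA b k ∈ I) (j : ℕ) :
    (∀ k, n + j < k → co hA (x ^ j * b) k ∈ I) ∧
      co hA (x ^ j * b) (n + j) - co hA b n ∈ I := by
  induction j with
  | zero =>
    constructor
    · intro k hk
      rw [pow_zero, one_mul]
      exact hb k (by omega)
    · rw [pow_zero, one_mul, Nat.add_zero, sub_self]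
      exact I.zero_mem
  | succ j ih =>
    have hx : x ^ (j + 1) * b = x * (x ^ j * b) := by rw [pow_succ', mul_assoc]
    constructor
    · intro k hk
      match k, hk with
      | (t + 1), hk =>
        rw [hx, co_x_mul_succ hA hadd]
        exact I.add_mem (ih.1 t (by omega)) (hδI _ (ih.1 (t + 1) (by omega)))
    · have hnj : n + (j + 1) = (n + j) + 1 := rfl
      rw [hx, hnj, co_x_mul_succ hA hadd]
      have h6 : δ (co hA (x ^ j * b) (n + j + 1)) ∈ I := hδI _ (ih.1 (n + j + 1) (by omega))
      have heq : co hA (x ^ j * b) (n + j) + δ (co hA (x ^ j * b) (n + j + 1)) - co hA b n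
          = (co hA (x ^ j * b) (n + j) - co hA b n) + δ (co hA (x ^ j * b) (n + j + 1)) := by
        abel
      rw [heq]
      exact I.add_mem ih.2 h6

lemma max_bad_index {I : TwoSidedIdeal R} {a : A} (ha : a ∉ oreLeftCoeffSet i x I) :
    ∃ m, co hA a m ∉ I ∧ ∀ k, m < k → co hA a k ∈ I := by
  classical
  have hex : ∃ k, co hA a k ∉ I := by
    by_contra h
    push_neg at h
    exact ha ((mem_left_iff hA).2 h)
  obtain ⟨k₀, hk₀⟩ := hex
  set S := (co hA a).support.filter (fun k => co hA a k ∉ I) with hS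
  have hk₀S : k₀ ∈ S := Finset.mem_filter.2
    ⟨Finsupp.mem_support_iff.2 (fun h0 => hk₀ (h0 ▸ I.zero_mem)), hk₀⟩
  have hne : S.Nonempty := ⟨k₀, hk₀S⟩
  refine ⟨S.max' hne, (Finset.mem_filter.1 (S.max'_mem hne)).2, fun k hk => ?_⟩
  by_contra hkI
  have hmem : k ∈ S := Finset.mem_filter.2
    ⟨Finsupp.mem_support_iff.2 (fun h0 => hkI (h0 ▸ I.zero_mem)), hkI⟩
  exact absurd (S.le_max' k hmem) (not_le.mpr hk)

lemma Tideal {I : TwoSidedIdeal R} (hδI : ∀ r ∈ I, δ r ∈ I)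
    (L : TwoSidedIdeal A) (m : ℕ) :
    ∃ T : TwoSidedIdeal R,
      (∀ r : R, r ∈ T ↔
        ∃ a, a ∈ L ∧ (∀ k, m < k → co hA a k ∈ I) ∧ r - co hA a m ∈ I) ∧
      (∀ r ∈ T, δ r ∈ T) := by
  classical
  set C : Set R :=
    {r : R | ∃ a, a ∈ L ∧ (∀ k, m < k → co hA a k ∈ I) ∧ r - co hA a m ∈ I} with hC
  have hzero : (0 : R) ∈ C := by
    refine ⟨0, L.zero_mem, fun k _ => ?_, ?_⟩
    · rw [co_zero hA]; simpa using I.zero_mem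
    · rw [co_zero hA]; simpa using I.zero_mem
  have haddC : ∀ {r r' : R}, r ∈ C → r' ∈ C → r + r' ∈ C := by
    rintro r r' ⟨a, ha, h2, h3⟩ ⟨a', ha', h2', h3'⟩
    refine ⟨a + a', L.add_mem ha ha', fun k hk => ?_, ?_⟩
    · rw [co_add hA, Finsupp.add_apply]
      exact I.add_mem (h2 k hk) (h2' k hk)
    · rw [co_add hA, Finsupp.add_apply]
      have heq : r + r' - (co hA a m + co hA a' m)
          = (r - co hA a m) + (r' - co hA a' m) := by abel
      rw [heq]
      exact I.add_mem h3 h3'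
  have hnegC : ∀ {r : R}, r ∈ C → -r ∈ C := by
    rintro r ⟨a, ha, h2, h3⟩
    refine ⟨-a, L.neg_mem ha, fun k hk => ?_, ?_⟩
    · rw [co_neg hA, Finsupp.neg_apply]
      exact I.neg_mem (h2 k hk)
    · rw [co_neg hA, Finsupp.neg_apply]
      have heq : -r - -co hA a m = -(r - co hA a m) := by abel
      rw [heq]
      exact I.neg_mem h3
  have hmlC : ∀ {s r : R}, r ∈ C → s * r ∈ C := by
    rintro s r ⟨a, ha, h2, h3⟩
    refine ⟨i s * a, L.mul_mem_left _ _ ha, fun k hk => ?_, ?_⟩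
    · rw [co_i_mul hA]
      exact I.mul_mem_left _ _ (h2 k hk)
    · rw [co_i_mul hA]
      have heq : s * r - s * co hA a m = s * (r - co hA a m) := (mul_sub s r (co hA a m)).symm
      rw [heq]
      exact I.mul_mem_left _ _ h3
  have hmrC : ∀ {r s : R}, r ∈ C → r * s ∈ C := by
    rintro r s ⟨a, ha, h2, h3⟩
    refine ⟨a * i s, L.mul_mem_right _ _ ha, fun k hk => ?_, ?_⟩
    · have hk' := keySum (I := I) (co hA a) (fun j => co hA (x ^ j * i s) k) m h2
        (fun j hj => by
          show (co hA (x ^ j * i s)) k ∈ I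
          rw [(co_xpow_i hA hadd j s).2 k (by omega)]
          exact I.zero_mem)
      beta_reduce at hk'
      rw [← co_mul_apply hA] at hk'
      rw [(co_xpow_i hA hadd m s).2 k hk, mul_zero, sub_zero] at hk'
      exact hk'
    · have hk' := keySum (I := I) (co hA a) (fun j => co hA (x ^ j * i s) m) m h2
        (fun j hj => by
          show (co hA (x ^ j * i s)) m ∈ I
          rw [(co_xpow_i hA hadd j s).2 m (by omega)]
          exact I.zero_mem)
      beta_reduce at hk'
      rw [← co_mul_apply hA] at hk'
      rw [(co_xpow_i hA hadd m s).1] at hk'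
      have heq : r * s - co hA (a * i s) m
          = (r - co hA a m) * s - (co hA (a * i s) m - co hA a m * s) := by
        rw [sub_mul]; abel
      rw [heq]
      exact I.sub_mem (I.mul_mem_right _ _ h3) hk'
  refine ⟨TwoSidedIdeal.mk' C hzero haddC hnegC hmlC hmrC, fun r => ?_, ?_⟩
  · exact TwoSidedIdeal.mem_mk' _ _ _ _ _ _ r
  · intro r hr
    rw [TwoSidedIdeal.mem_mk'] at hr ⊢
    obtain ⟨a, ha, h2, h3⟩ := hr
    refine ⟨x * a - a * x,
      L.sub_mem (L.mul_mem_left x a ha) (L.mul_mem_right a x ha), fun k hk => ?_, ?_⟩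
    · rw [co_commutator hA hadd]
      exact hδI _ (h2 k hk)
    · rw [co_commutator hA hadd]
      have heq : r = (r - co hA a m) + co hA a m := by abel
      have hδr : δ r = δ (r - co hA a m) + δ (co hA a m) := by
        conv_lhs => rw [heq]
        exact hadd _ _
      rw [hδr]
      have heq2 : δ (r - co hA a m) + δ (co hA a m) - δ (co hA a m)
          = δ (r - co hA a m) := by abel
      rw [heq2]
      exact hδI _ h3

include hA

lemma extIdeal {J : TwoSidedIdeal R} (hJ : ∀ r ∈ J, δ r ∈ J) :
    ∃ L : TwoSidedIdeal A, (L : Set A) = oreLeftCoeffSet i x J := by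
  refine ⟨TwoSidedIdeal.mk' (oreLeftCoeffSet i x J)
    ((mem_left_iff hA).2 fun k => by rw [co_zero hA]; simpa using J.zero_mem)
    (fun {a b} ha hb => (mem_left_iff hA).2 fun k => by
      rw [co_add hA, Finsupp.add_apply]
      exact J.add_mem ((mem_left_iff hA).1 ha k) ((mem_left_iff hA).1 hb k))
    (fun {a} ha => (mem_left_iff hA).2 fun k => by
      rw [co_neg hA, Finsupp.neg_apply]
      exact J.neg_mem ((mem_left_iff hA).1 ha k))
    (fun {a p} hp => (mem_left_iff hA).2 fun k => by
      rw [co_mul_apply hA]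
      exact sum_mem_tsi _ _ fun j _ => J.mul_mem_left _ _
        (co_xpow_mul_mem hA hadd hJ ((mem_left_iff hA).1 hp) j k))
    (fun {p a} hp => (mem_left_iff hA).2 fun k => by
      rw [co_mul_apply hA]
      exact sum_mem_tsi _ _ fun j _ => J.mul_mem_right _ _ ((mem_left_iff hA).1 hp j)),
    TwoSidedIdeal.coe_mk' _ _ _ _ _ _⟩

omit hadd

lemma right_zero {I : TwoSidedIdeal R} : (0 : A) ∈ oreRightCoeffSet i x I :=
  ⟨0, fun k => by simpa using I.zero_mem, by rw [Finsupp.sum_zero_index]⟩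

lemma right_add {I : TwoSidedIdeal R} {a b : A} (ha : a ∈ oreRightCoeffSet i x I)
    (hb : b ∈ oreRightCoeffSet i x I) : a + b ∈ oreRightCoeffSet i x I := by
  obtain ⟨c, hc, rfl⟩ := ha
  obtain ⟨c', hc', rfl⟩ := hb
  refine ⟨c + c', fun k => by rw [Finsupp.add_apply]; exact I.add_mem (hc k) (hc' k), ?_⟩
  rw [Finsupp.sum_add_index' (fun k => by simp) (fun k r s => by rw [map_add, mul_add])]

lemma right_gen {I : TwoSidedIdeal R} {r : R} (hr : r ∈ I) (k : ℕ) :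
    x ^ k * i r ∈ oreRightCoeffSet i x I := by
  refine ⟨Finsupp.single k r, fun j => ?_, ?_⟩
  · rw [Finsupp.single_apply]
    split
    · exact hr
    · exact I.zero_mem
  · rw [Finsupp.sum_single_index (by simp)]

include hadd

lemma right_mul_x {I : TwoSidedIdeal R} (hδI : ∀ r ∈ I, δ r ∈ I) {q : A}
    (h : q ∈ oreRightCoeffSet i x I) : q * x ∈ oreRightCoeffSet i x I := by
  obtain ⟨c, hc, rfl⟩ := h
  rw [Finsupp.sum_mul]
  simp only [Finsupp.sum]
  refine Finset.sum_induction _ _ (fun a b ha hb => right_add hA ha hb) (right_zero hA) ?_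
  intro k _
  have hcm : i (c k) * x = x * i (c k) + i (-(δ (c k))) := by
    rw [map_neg, hA.comm, RingHom.id_apply]
    abel
  have hterm : x ^ k * i (c k) * x = x ^ (k + 1) * i (c k) + x ^ k * i (-(δ (c k))) := by
    rw [mul_assoc, hcm, mul_add, ← mul_assoc, ← pow_succ]
  rw [hterm]
  exact right_add hA (right_gen hA (hc k) _)
    (right_gen hA (I.neg_mem (hδI _ (hc k))) _)

lemma gen_left_mem_right {I : TwoSidedIdeal R} (hδI : ∀ r ∈ I, δ r ∈ I)
    {r : R} (hr : r ∈ I) (k : ℕ) : i r * x ^ k ∈ oreRightCoeffSet i x I := by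
  induction k with
  | zero => simpa using right_gen hA hr 0
  | succ k ih =>
    have : i r * x ^ (k + 1) = (i r * x ^ k) * x := by rw [mul_assoc, ← pow_succ]
    rw [this]
    exact right_mul_x hA hadd hδI ih

lemma left_subset_right {I : TwoSidedIdeal R} (hδI : ∀ r ∈ I, δ r ∈ I) :
    oreLeftCoeffSet i x I ⊆ oreRightCoeffSet i x I := by
  rintro a ⟨c, hc, rfl⟩
  simp only [Finsupp.sum]
  refine Finset.sum_induction _ _ (fun a b ha hb => right_add hA ha hb) (right_zero hA) ?_
  intro k _
  exact gen_left_mem_right hA hadd hδI (hc k) k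

lemma right_subset_left {I : TwoSidedIdeal R} (hδI : ∀ r ∈ I, δ r ∈ I) :
    oreRightCoeffSet i x I ⊆ oreLeftCoeffSet i x I := by
  rintro a ⟨c, hc, rfl⟩
  simp only [Finsupp.sum]
  refine Finset.sum_induction _ _ (fun a b ha hb => ?_) ?_ ?_
  · exact (mem_left_iff hA).2 fun k => by
      rw [co_add hA, Finsupp.add_apply]
      exact I.add_mem ((mem_left_iff hA).1 ha k) ((mem_left_iff hA).1 hb k)
  · exact (mem_left_iff hA).2 fun k => by rw [co_zero hA]; simpa using I.zero_mem
  · intro k _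
    refine (mem_left_iff hA).2 fun j => ?_
    refine co_xpow_mul_mem hA hadd hδI (a := i (c k)) (fun t => ?_) k j
    rw [co_i hA, Finsupp.single_apply]
    split
    · exact hc k
    · exact I.zero_mem

lemma mem_left_i {I : TwoSidedIdeal R} {r : R} :
    i r ∈ oreLeftCoeffSet i x I ↔ r ∈ I := by
  constructor
  · intro h
    have := (mem_left_iff hA).1 h 0
    rwa [co_i hA, Finsupp.single_apply, if_pos rfl] at this
  · intro h
    refine (mem_left_iff hA).2 fun k => ?_
    rw [co_i hA, Finsupp.single_apply]
    split
    · exact h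
    · exact I.zero_mem

end More

end OreAux

/-- Let `δ` be a derivation of `R` and `A = R[x; δ]` the differential operator
ring (Ore extension with `σ = id`). If `I` is a proper `δ`-invariant two-sided ideal of `R`,
then `I` is `δ`-prime iff the extension ideal `I·A` is a prime ideal of `A`; in this case
`I·A = A·I` and `I·A ∩ R = I`. -/
theorem deltaPrime_iff_extension_prime
    {R A : Type*} [Ring R] [Ring A]
    (δ : R → R)
    (hadd : ∀ r s : R, δ (r + s) = δ r + δ s)
    (hleib : ∀ r s : R, δ (r * s) = δ r * s + r * δ s)
    (i : R →+* A) (x : A) (hA : IsOreExtension (RingHom.id R) δ i x)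
    (I : TwoSidedIdeal R) (hproper : (I : Set R) ≠ Set.univ)
    (hδinv : ∀ r ∈ I, δ r ∈ I) :
    ((∀ J K : TwoSidedIdeal R,
        (∀ r ∈ J, δ r ∈ J) → (∀ r ∈ K, δ r ∈ K) →
        (∀ a ∈ J, ∀ b ∈ K, a * b ∈ I) → J ≤ I ∨ K ≤ I) ↔
      (oreLeftCoeffSet i x I ≠ Set.univ ∧
        ∀ J K : TwoSidedIdeal A,
          (∀ a ∈ J, ∀ b ∈ K, a * b ∈ oreLeftCoeffSet i x I) →
          (J : Set A) ⊆ oreLeftCoeffSet i x I ∨ (K : Set A) ⊆ oreLeftCoeffSet i x I)) ∧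
    oreLeftCoeffSet i x I = oreRightCoeffSet i x I ∧
    ⇑i ⁻¹' oreLeftCoeffSet i x I = (I : Set R) := by
  classical
  refine ⟨⟨?_, ?_⟩, ?_, ?_⟩
  · -- mp : δ-prime → extension prime
    intro hδp
    constructor
    · -- P ≠ univ
      obtain ⟨r, hr⟩ := (Set.ne_univ_iff_exists_notMem _).1 hproper
      refine (Set.ne_univ_iff_exists_notMem _).2 ⟨i r, fun hmem => hr ?_⟩
      exact (OreAux.mem_left_i hA hadd).1 hmem
    · intro 𝕁 𝕂 hprod
      by_cases h1 : (𝕁 : Set A) ⊆ oreLeftCoeffSet i x I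
      · exact Or.inl h1
      by_cases h2 : (𝕂 : Set A) ⊆ oreLeftCoeffSet i x I
      · exact Or.inr h2
      exfalso
      obtain ⟨a₀, ha₀J, ha₀P⟩ := Set.not_subset.1 h1
      obtain ⟨b₀, hb₀K, hb₀P⟩ := Set.not_subset.1 h2
      obtain ⟨m, ham, hamI⟩ := OreAux.max_bad_index hA hadd (I := I) ha₀P
      obtain ⟨n, hbn, hbnI⟩ := OreAux.max_bad_index hA hadd (I := I) hb₀P
      obtain ⟨TJ, hTJmem, hTJδ⟩ := OreAux.Tideal hA hadd hδinv 𝕁 m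
      obtain ⟨TK, hTKmem, hTKδ⟩ := OreAux.Tideal hA hadd hδinv 𝕂 n
      have hprod' : ∀ r ∈ TJ, ∀ s ∈ TK, r * s ∈ I := by
        intro r hr s hs
        obtain ⟨a, haL, ha2, ha3⟩ := (hTJmem r).1 hr
        obtain ⟨b, hbL, hb2, hb3⟩ := (hTKmem s).1 hs
        have hab : a * b ∈ oreLeftCoeffSet i x I := hprod a haL b hbL
        have habk : OreAux.co hA (a * b) (m + n) ∈ I :=
          (OreAux.mem_left_iff hA).1 hab (m + n)
        have hgj : ∀ j, j < m → (OreAux.co hA (x ^ j * b)) (m + n) ∈ I := fun j hj =>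
          (OreAux.co_xpow_mul_bound hA hadd hδinv hb2 j).1 (m + n) (by omega)
        have hk := OreAux.keySum (I := I) (OreAux.co hA a)
          (fun j => OreAux.co hA (x ^ j * b) (m + n)) m ha2 hgj
        beta_reduce at hk
        rw [← OreAux.co_mul_apply hA] at hk
        have h7 : OreAux.co hA a m * OreAux.co hA (x ^ m * b) (m + n) ∈ I := by
          have h := I.sub_mem habk hk
          rwa [sub_sub_cancel] at h
        have h8 : OreAux.co hA (x ^ m * b) (m + n) - OreAux.co hA b n ∈ I := by
          have h := (OreAux.co_xpow_mul_bound hA hadd hδinv hb2 m).2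
          rwa [show n + m = m + n by omega] at h
        have h9 : OreAux.co hA a m * OreAux.co hA b n ∈ I := by
          have h := I.sub_mem h7 (I.mul_mem_left (OreAux.co hA a m) _ h8)
          rwa [mul_sub, sub_sub_cancel] at h
        have h11 : r * s = ((r - OreAux.co hA a m) * s
            + OreAux.co hA a m * (s - OreAux.co hA b n))
            + OreAux.co hA a m * OreAux.co hA b n := by
          rw [sub_mul, mul_sub]; abel
        rw [h11]
        exact I.add_mem (I.add_mem (I.mul_mem_right _ _ ha3) (I.mul_mem_left _ _ hb3)) h9
      rcases hδp TJ TK hTJδ hTKδ hprod' with h | h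
      · exact ham (h ((hTJmem _).2 ⟨a₀, ha₀J, hamI, by rw [sub_self]; exact I.zero_mem⟩))
      · exact hbn (h ((hTKmem _).2 ⟨b₀, hb₀K, hbnI, by rw [sub_self]; exact I.zero_mem⟩))
  · -- mpr : extension prime → δ-prime
    rintro ⟨hne, hp⟩ J K hJ hK hJK
    obtain ⟨LJ, hLJ⟩ := OreAux.extIdeal hA hadd hJ
    obtain ⟨LK, hLK⟩ := OreAux.extIdeal hA hadd hK
    have hprod : ∀ a ∈ LJ, ∀ b ∈ LK, a * b ∈ oreLeftCoeffSet i x I := by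
      intro a ha b hb
      have haJ : ∀ k, OreAux.co hA a k ∈ J :=
        (OreAux.mem_left_iff hA).1 (hLJ ▸ (SetLike.mem_coe.2 ha))
      have hbK : ∀ k, OreAux.co hA b k ∈ K :=
        (OreAux.mem_left_iff hA).1 (hLK ▸ (SetLike.mem_coe.2 hb))
      refine (OreAux.mem_left_iff hA).2 fun k => ?_
      rw [OreAux.co_mul_apply hA]
      refine OreAux.sum_mem_tsi _ _ fun j _ => ?_
      exact hJK _ (haJ j) _ (OreAux.co_xpow_mul_mem hA hadd hK hbK j k)
    rcases hp LJ LK hprod with h | h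
    · left
      rw [TwoSidedIdeal.le_iff]
      intro r hr
      have hmem : i r ∈ (LJ : Set A) := by
        rw [hLJ]
        exact (OreAux.mem_left_i hA hadd).2 hr
      exact (OreAux.mem_left_i hA hadd).1 (h hmem)
    · right
      rw [TwoSidedIdeal.le_iff]
      intro r hr
      have hmem : i r ∈ (LK : Set A) := by
        rw [hLK]
        exact (OreAux.mem_left_i hA hadd).2 hr
      exact (OreAux.mem_left_i hA hadd).1 (h hmem)
  · exact Set.Subset.antisymm (OreAux.left_subset_right hA hadd hδinv)
      (OreAux.right_subset_left hA hadd hδinv)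
  · ext r
    simp only [Set.mem_preimage, SetLike.mem_coe]
    exact OreAux.mem_left_i hA hadd
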